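/- Let S denote the shift operator on sequences, S x_n = x_{n+1}, let ξ_n = x_n x_{n+2k+1} - x_{n+1} x_{n+2k} - a(x_{n+k} + x_{n+k+1}), and let L = S^{6k} - K(S^{4k} - S^{2k}) - 1 for a constant K. Then for any sequence (x_n) one has the operator identity L ξ_n = x_{n+6k}(Lx)_{n+2k+1} - x_{n+6k+1}(Lx)_{n+2k} - x_{n+2k}(Lx)_{n+1} + x_{n+2k+1}(Lx)_n - a((Lx)_{n+k+1} + (Lx)_{n+k}), where (Lx)_m = x_{m+6k} - K(x_{m+4k} - x_{m+2k}) - x_m. -/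
import Mathlib


theorem heiho_operator_identity {R : Type*} [CommRing R] (k : ℕ) (hk : 0 < k)
    (a K : R) (x : ℤ → R) (ξ Lx : ℤ → R)
    (hξ : ∀ m : ℤ, ξ m = x m * x (m + 2 * k + 1) - x (m + 1) * x (m + 2 * k)
      - a * (x (m + k) + x (m + k + 1)))
    (hLx : ∀ m : ℤ, Lx m = x (m + 6 * k) - K * (x (m + 4 * k) - x (m + 2 * k)) - x m) :
    ∀ n : ℤ, ξ (n + 6 * k) - K * (ξ (n + 4 * k) - ξ (n + 2 * k)) - ξ n =
      x (n + 6 * k) * Lx (n + 2 * k + 1) - x (n + 6 * k + 1) * Lx (n + 2 * k)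
        - x (n + 2 * k) * Lx (n + 1) + x (n + 2 * k + 1) * Lx n
        - a * (Lx (n + k + 1) + Lx (n + k)) := by
  intro n
  simp only [hξ, hLx]
  ring_nf
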